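/- (Gneiting's representation) For all η > 0, ρ² > 0 and x ∈ ℝ, the integral over s ∈ (0, ∞) of (2π s)^(−1/2) · exp(−x²/(2s)) · exp(−(1/2)((η/ρ²) s + η ρ²/s)) with respect to s equals √(ρ²/η) · exp(−√(η (η + x²/ρ²))); that is, a normal scale mixture with variance s and unnormalized GIG(1, η/ρ², η ρ²) mixing kernel produces the unnormalized hyperbolic kernel with shape η and scale ρ². -/

import Mathlib

open MeasureTheory Real

open Set

lemma hasDeriv_phi (a b : ℝ) {t : ℝ} (ht : 0 < t) :
    HasDerivAt (fun t : ℝ => a * t - b / t) (a + b / t ^ 2) t := by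
  have h1 : HasDerivAt (fun t : ℝ => a * t) a t := by
    simpa using (hasDerivAt_id t).const_mul a
  have h2 : HasDerivAt (fun t : ℝ => b / t) (-(b / t ^ 2)) t := by
    simpa [div_eq_mul_inv, neg_div, mul_comm] using (hasDerivAt_inv ht.ne').const_mul b
  have h3 := h1.sub h2; rw [sub_neg_eq_add] at h3; exact h3

lemma phi_image (a b : ℝ) (ha : 0 < a) (hb : 0 < b) :
    (fun t : ℝ => a * t - b / t) '' Ioi 0 = univ := by
  ext y
  simp only [mem_univ, iff_true, mem_image, mem_Ioi]
  set D := Real.sqrt (y ^ 2 + 4 * a * b) with hD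
  have hD2 : D ^ 2 = y ^ 2 + 4 * a * b := Real.sq_sqrt (by positivity)
  have hDnn : 0 ≤ D := Real.sqrt_nonneg _
  have hyD : 0 < y + D := by nlinarith [mul_pos ha hb]
  refine ⟨(y + D) / (2 * a), by positivity, ?_⟩
  have hne : (y + D) / (2 * a) ≠ 0 := by positivity
  field_simp
  nlinarith [hD2]

lemma phi_injOn (a b : ℝ) (ha : 0 < a) (hb : 0 < b) :
    InjOn (fun t : ℝ => a * t - b / t) (Ioi 0) := by
  have : StrictMonoOn (fun t : ℝ => a * t - b / t) (Ioi 0) := by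
    apply strictMonoOn_of_deriv_pos (convex_Ioi 0)
    · intro t ht
      exact ((hasDeriv_phi a b ht).continuousAt).continuousWithinAt
    · intro t ht
      rw [interior_Ioi] at ht
      rw [(hasDeriv_phi a b ht).deriv]
      positivity
  exact this.injOn

lemma gauss_half : ∫ v : ℝ, Real.exp (-v ^ 2 / 2) = Real.sqrt (2 * π) := by
  have h : ∀ v : ℝ, -v ^ 2 / 2 = -(2⁻¹ : ℝ) * v ^ 2 := fun v => by ring
  simp_rw [h]
  rw [integral_gaussian]
  rw [show π / 2⁻¹ = 2 * π by ring]

lemma glasser (a b : ℝ) (ha : 0 < a) (hb : 0 < b) :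
    ∫ t in Ioi (0 : ℝ), (a + b / t ^ 2) * Real.exp (-(a * t - b / t) ^ 2 / 2)
      = Real.sqrt (2 * π) := by
  have key := integral_image_eq_integral_abs_deriv_smul measurableSet_Ioi
      (fun t (ht : t ∈ Ioi (0:ℝ)) => (hasDeriv_phi a b ht).hasDerivWithinAt)
      (phi_injOn a b ha hb) (fun v => Real.exp (-v ^ 2 / 2))
  rw [phi_image a b ha hb, Measure.restrict_univ, gauss_half] at key
  rw [key]
  apply setIntegral_congr_fun measurableSet_Ioi
  intro t ht
  have ht' : (0:ℝ) < t := ht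
  have : |a + b / t ^ 2| = a + b / t ^ 2 := abs_of_pos (by positivity)
  simp [this, smul_eq_mul]

lemma glasser_integrable (a b : ℝ) (ha : 0 < a) (hb : 0 < b) :
    IntegrableOn (fun t => (a + b / t ^ 2) * Real.exp (-(a * t - b / t) ^ 2 / 2))
      (Ioi (0 : ℝ)) := by
  have key := (integrableOn_image_iff_integrableOn_abs_deriv_smul measurableSet_Ioi
      (fun t (ht : t ∈ Ioi (0:ℝ)) => (hasDeriv_phi a b ht).hasDerivWithinAt)
      (phi_injOn a b ha hb) (fun v => Real.exp (-v ^ 2 / 2))).mp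
  rw [phi_image a b ha hb] at key
  have hg : IntegrableOn (fun v => Real.exp (-v ^ 2 / 2)) univ := by
    rw [integrableOn_univ]
    have h : ∀ v : ℝ, -v ^ 2 / 2 = -(2⁻¹ : ℝ) * v ^ 2 := fun v => by ring
    simp_rw [h]
    exact integrable_exp_neg_mul_sq (by norm_num)
  have := key hg
  apply this.congr_fun ?_ measurableSet_Ioi
  intro t ht
  have ht' : (0:ℝ) < t := ht
  have : |a + b / t ^ 2| = a + b / t ^ 2 := abs_of_pos (by positivity)
  simp [this, smul_eq_mul]

lemma psi_hasDeriv (c : ℝ) {t : ℝ} (ht : 0 < t) :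
    HasDerivAt (fun t : ℝ => c * t⁻¹) (c * (-(t ^ 2)⁻¹)) t :=
  (hasDerivAt_inv ht.ne').const_mul c

lemma psi_image (c : ℝ) (hc : 0 < c) : (fun t : ℝ => c * t⁻¹) '' Ioi 0 = Ioi 0 := by
  ext y
  simp only [mem_image, mem_Ioi]
  constructor
  · rintro ⟨t, ht, rfl⟩; positivity
  · intro hy
    refine ⟨c / y, by positivity, ?_⟩
    field_simp

lemma psi_injOn (c : ℝ) (hc : 0 < c) : InjOn (fun t : ℝ => c * t⁻¹) (Ioi 0) := by
  intro s hs t ht h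
  have h2 : s⁻¹ = t⁻¹ := mul_left_cancel₀ hc.ne' h
  exact inv_injective h2

lemma refl_eq (a b : ℝ) (ha : 0 < a) (hb : 0 < b) :
    ∫ t in Ioi (0 : ℝ), (b / t ^ 2) * Real.exp (-(a * t - b / t) ^ 2 / 2)
      = ∫ t in Ioi (0 : ℝ), a * Real.exp (-(a * t - b / t) ^ 2 / 2) := by
  have hc : 0 < b / a := by positivity
  have key := integral_image_eq_integral_abs_deriv_smul measurableSet_Ioi
      (fun t (ht : t ∈ Ioi (0:ℝ)) => (psi_hasDeriv (b / a) ht).hasDerivWithinAt)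
      (psi_injOn _ hc) (fun t => a * Real.exp (-(a * t - b / t) ^ 2 / 2))
  rw [psi_image _ hc] at key
  rw [key]
  symm
  apply setIntegral_congr_fun measurableSet_Ioi
  intro t ht
  have ht' : (0:ℝ) < t := ht
  have habs : |b / a * (-(t ^ 2)⁻¹)| = b / a * (t ^ 2)⁻¹ := by
    have hp : (0:ℝ) < b / a * (t ^ 2)⁻¹ := by positivity
    rw [abs_of_nonpos (by nlinarith [hp] : b / a * (-(t ^ 2)⁻¹) ≤ 0)]
    ring
  have harg : a * (b / a * t⁻¹) - b / (b / a * t⁻¹) = -(a * t - b / t) := by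
    field_simp
    ring
  simp only [smul_eq_mul, habs, harg, neg_sq]
  field_simp

lemma E_integral (a b : ℝ) (ha : 0 < a) (hb : 0 < b) :
    ∫ t in Ioi (0 : ℝ), Real.exp (-(a * t - b / t) ^ 2 / 2)
      = Real.sqrt (2 * π) / (2 * a) := by
  set E : ℝ → ℝ := fun t => Real.exp (-(a * t - b / t) ^ 2 / 2) with hE
  have hcont : ContinuousOn E (Ioi (0:ℝ)) := by
    apply Real.continuous_exp.comp_continuousOn
    apply ContinuousOn.div _ continuousOn_const (by norm_num)
    exact (((continuousOn_const.mul continuousOn_id).sub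
      (continuousOn_const.div continuousOn_id (fun t ht => ne_of_gt ht))).pow 2).neg
  have hsum : IntegrableOn (fun t => (a + b / t ^ 2) * E t) (Ioi 0) :=
    glasser_integrable a b ha hb
  have hEnn : ∀ t : ℝ, 0 ≤ E t := fun t => (Real.exp_pos _).le
  have hintA : IntegrableOn (fun t => a * E t) (Ioi 0) := by
    apply hsum.mono' ((continuousOn_const.mul hcont).aestronglyMeasurable measurableSet_Ioi)
    filter_upwards [ae_restrict_mem measurableSet_Ioi] with t ht
    have ht' : (0:ℝ) < t := ht
    show ‖a * E t‖ ≤ _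
    rw [Real.norm_eq_abs, abs_of_nonneg (by positivity : (0:ℝ) ≤ a * E t)]
    have : 0 ≤ b / t ^ 2 := by positivity
    nlinarith [hEnn t]
  have hintB : IntegrableOn (fun t => (b / t ^ 2) * E t) (Ioi 0) := by
    have hc2 : ContinuousOn (fun t : ℝ => b / t ^ 2) (Ioi 0) :=
      continuousOn_const.div ((continuous_pow 2).continuousOn)
        (fun t ht => pow_ne_zero 2 (ne_of_gt (mem_Ioi.mp ht)))
    apply hsum.mono' ((hc2.mul hcont).aestronglyMeasurable measurableSet_Ioi)
    filter_upwards [ae_restrict_mem measurableSet_Ioi] with t ht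
    have ht' : (0:ℝ) < t := ht
    show ‖b / t ^ 2 * E t‖ ≤ _
    rw [Real.norm_eq_abs, abs_of_nonneg (by positivity : (0:ℝ) ≤ b / t ^ 2 * E t)]
    have hEpos : 0 < E t := Real.exp_pos _
    nlinarith [mul_pos ha hEpos]
  have hsplit : ∫ t in Ioi (0:ℝ), (a + b / t ^ 2) * E t
      = (∫ t in Ioi (0:ℝ), a * E t) + ∫ t in Ioi (0:ℝ), (b / t ^ 2) * E t := by
    rw [← integral_add hintA hintB]
    apply setIntegral_congr_fun measurableSet_Ioi
    intro t ht
    ring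
  have hrefl := refl_eq a b ha hb
  have hgl := glasser a b ha hb
  have h2 : 2 * (∫ t in Ioi (0:ℝ), a * E t) = Real.sqrt (2 * π) := by
    rw [← hgl, hsplit, hrefl]; ring
  have h3 : ∫ t in Ioi (0:ℝ), a * E t = a * ∫ t in Ioi (0:ℝ), E t :=
    integral_const_mul a E
  rw [h3] at h2
  field_simp at h2 ⊢
  linarith

lemma sq_image : (fun t : ℝ => t ^ 2) '' Ioi 0 = Ioi 0 := by
  ext y
  simp only [mem_image, mem_Ioi]
  constructor
  · rintro ⟨t, ht, rfl⟩; positivity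
  · intro hy
    exact ⟨Real.sqrt y, Real.sqrt_pos.mpr hy, Real.sq_sqrt hy.le⟩

lemma sq_injOn : InjOn (fun t : ℝ => t ^ 2) (Ioi 0) := by
  intro s hs t ht h
  have hs' : (0:ℝ) < s := hs
  have ht' : (0:ℝ) < t := ht
  have h' : s ^ 2 = t ^ 2 := h
  rw [← Real.sqrt_sq hs'.le, ← Real.sqrt_sq ht'.le, h']

lemma kernel_integral (a b : ℝ) (ha : 0 < a) (hb : 0 < b) :
    ∫ s in Ioi (0 : ℝ), s ^ (-(1 : ℝ) / 2) * Real.exp (-((a * s + b / s) / 2))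
      = Real.sqrt (2 * π / a) * Real.exp (-Real.sqrt (a * b)) := by
  have hsa : 0 < Real.sqrt a := Real.sqrt_pos.mpr ha
  have hsb : 0 < Real.sqrt b := Real.sqrt_pos.mpr hb
  have hderiv : ∀ t ∈ Ioi (0:ℝ), HasDerivWithinAt (fun t : ℝ => t ^ 2) (2 * t) (Ioi 0) t := by
    intro t ht
    simpa using (hasDerivAt_pow 2 t).hasDerivWithinAt
  have key := integral_image_eq_integral_abs_deriv_smul measurableSet_Ioi hderiv sq_injOn
      (fun s => s ^ (-(1 : ℝ) / 2) * Real.exp (-((a * s + b / s) / 2)))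
  rw [sq_image] at key
  rw [key]
  have hcongr : ∀ t ∈ Ioi (0:ℝ),
      |2 * t| • ((t ^ 2 : ℝ) ^ (-(1 : ℝ) / 2) * Real.exp (-((a * t ^ 2 + b / t ^ 2) / 2)))
        = (2 * Real.exp (-Real.sqrt (a * b)))
            * Real.exp (-(Real.sqrt a * t - Real.sqrt b / t) ^ 2 / 2) := by
    intro t ht
    have ht' : (0:ℝ) < t := ht
    have h1 : ((t ^ 2 : ℝ)) ^ (-(1 : ℝ) / 2) = t⁻¹ := by
      rw [← Real.rpow_natCast t 2, ← Real.rpow_mul ht'.le]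
      norm_num [Real.rpow_neg_one]
    have hkey : a * t ^ 2 + b / t ^ 2
        = (Real.sqrt a * t - Real.sqrt b / t) ^ 2 + 2 * Real.sqrt (a * b) := by
      have e1 : (Real.sqrt a * t) ^ 2 = a * t ^ 2 := by
        rw [mul_pow, Real.sq_sqrt ha.le]
      have e2 : (Real.sqrt b / t) ^ 2 = b / t ^ 2 := by
        rw [div_pow, Real.sq_sqrt hb.le]
      have e3 : (Real.sqrt a * t) * (Real.sqrt b / t) = Real.sqrt (a * b) := by
        rw [Real.sqrt_mul ha.le]
        field_simp
      nlinarith [sq_nonneg (Real.sqrt a * t - Real.sqrt b / t)]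
    rw [h1, abs_of_pos (by positivity : (0:ℝ) < 2 * t), smul_eq_mul, hkey]
    rw [show -(((Real.sqrt a * t - Real.sqrt b / t) ^ 2 + 2 * Real.sqrt (a * b)) / 2)
        = (-Real.sqrt (a * b)) + (-(Real.sqrt a * t - Real.sqrt b / t) ^ 2 / 2) by ring]
    rw [Real.exp_add]
    field_simp
  rw [setIntegral_congr_fun measurableSet_Ioi hcongr, integral_const_mul,
    E_integral _ _ hsa hsb]
  rw [show Real.sqrt (2 * π / a) = Real.sqrt (2 * π) / Real.sqrt a from
    Real.sqrt_div (by positivity) a]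
  field_simp

/-- Gneiting's representation: a normal scale mixture with variance `s` and
unnormalized `GIG(1, η/ρ², η ρ²)` mixing kernel produces the unnormalized
hyperbolic kernel with shape `η` and scale `ρ²`. -/
theorem gneiting_representation (η ρ2 x : ℝ) (hη : 0 < η) (hρ : 0 < ρ2) :
    ∫ s in Set.Ioi (0 : ℝ),
        (2 * π * s) ^ (-(1 : ℝ) / 2) * Real.exp (-x ^ 2 / (2 * s))
          * Real.exp (-(1 / 2) * ((η / ρ2) * s + η * ρ2 / s))
      = Real.sqrt (ρ2 / η) * Real.exp (-Real.sqrt (η * (η + x ^ 2 / ρ2))) := by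
  have ha : (0:ℝ) < η / ρ2 := by positivity
  have hb : (0:ℝ) < η * ρ2 + x ^ 2 := by positivity
  have hπ : (0:ℝ) < 2 * π := by positivity
  have hcongr : ∀ s ∈ Ioi (0:ℝ),
      (2 * π * s) ^ (-(1 : ℝ) / 2) * Real.exp (-x ^ 2 / (2 * s))
          * Real.exp (-(1 / 2) * ((η / ρ2) * s + η * ρ2 / s))
        = (2 * π) ^ (-(1 : ℝ) / 2)
            * (s ^ (-(1 : ℝ) / 2)
              * Real.exp (-((η / ρ2 * s + (η * ρ2 + x ^ 2) / s) / 2))) := by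
    intro s hs
    have hs' : (0:ℝ) < s := hs
    rw [Real.mul_rpow hπ.le hs'.le, mul_assoc, ← Real.exp_add]
    rw [show -x ^ 2 / (2 * s) + -(1 / 2) * (η / ρ2 * s + η * ρ2 / s)
        = -((η / ρ2 * s + (η * ρ2 + x ^ 2) / s) / 2) by field_simp; ring]
    ring
  rw [setIntegral_congr_fun measurableSet_Ioi hcongr, integral_const_mul,
    kernel_integral _ _ ha hb]
  have hab : η / ρ2 * (η * ρ2 + x ^ 2) = η * (η + x ^ 2 / ρ2) := by
    field_simp
  rw [hab]
  rw [show (2 * π : ℝ) ^ (-(1 : ℝ) / 2) = (Real.sqrt (2 * π))⁻¹ by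
    rw [show (-(1:ℝ)/2) = -(1/2 : ℝ) by norm_num, Real.rpow_neg hπ.le,
      ← Real.sqrt_eq_rpow]]
  rw [show Real.sqrt (2 * π / (η / ρ2)) = Real.sqrt (2 * π) * Real.sqrt (ρ2 / η) by
    rw [← Real.sqrt_mul hπ.le]
    congr 1
    field_simp]
  rw [← mul_assoc, ← mul_assoc]
  rw [inv_mul_cancel₀ (ne_of_gt (Real.sqrt_pos.mpr hπ)), one_mul]
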